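/- Let M be a commutative idempotent monoid acting additively on an abelian group G, F : M → G a function satisfying the chain rule, and suppose X_1, …, X_n ∈ M form an F-Markov chain. Then for all subsets I, J ⊆ [n] with ∅ ≠ I = {i_1 < i_2 < … < i_q}, the equality X_J.F(X_{i_1}; X_{i_2}; …; X_{i_q}) = X_J.F(X_{i_1}; X_{i_q}) holds. -/

import Mathlib

namespace AMRF
/-- An additive monoid action of a commutative monoid `M` on an abelian group `G`. -/
structure MAction (M G : Type*) [CommMonoid M] [AddCommGroup G] where
  act : M → G → G
  act_one : ∀ g, act 1 g = g
  act_mul : ∀ X Y g, act X (act Y g) = act (X * Y) g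
  act_add : ∀ X g h, act X (g + h) = act X g + act X h

variable {M G : Type*} [CommMonoid M] [AddCommGroup G]

/-- `F : M → G` satisfies the chain rule `F(XY) = F(X) + X.F(Y)`. -/
def ChainRule (A : MAction M G) (F : M → G) : Prop :=
  ∀ X Y : M, F (X * Y) = F X + A.act X (F Y)

/-- Higher-order terms on a *reversed* argument list: the head of the list is the *last*
argument `Y_q` in `F_q(Y₁; …; Y_q)`. -/
def Fseq (A : MAction M G) (F : M → G) : List M → G
  | [] => 0
  | [Y] => F Y
  | Y :: Z :: l => Fseq A F (Z :: l) - A.act Y (Fseq A F (Z :: l))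

/-- `Fof A F [Y₁, …, Y_q] = F_q(Y₁; …; Y_q)`, defined inductively by
`F_q(Y₁; …; Y_q) = F_{q−1}(Y₁; …; Y_{q−1}) − Y_q.F_{q−1}(Y₁; …; Y_{q−1})`. -/
def Fof (A : MAction M G) (F : M → G) (l : List M) : G :=
  Fseq A F l.reverse

/-- The interaction term `F(;_{i∈I} X_i)`, with arguments in increasing index order. -/
def Fint (A : MAction M G) (F : M → G) {ι : Type*} [LinearOrder ι] (X : ι → M)
    (I : Finset ι) : G :=
  Fof A F ((I.sort (· ≤ ·)).map X)

/-- The `F`-independence relation: `X ⊥_F Y | Z` iff `Z.F(X; Y) = 0`, where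
`F(X; Y) = F(X) − Y.F(X)` is the second-order term. -/
def Findep (A : MAction M G) (F : M → G) (X Y Z : M) : Prop :=
  A.act Z (F X - A.act Y (F X)) = 0

/-- `X₁, …, X_n` form an `F`-Markov chain. -/
def FMarkovChain (A : MAction M G) (F : M → G) {n : ℕ} (X : Fin n → M) : Prop :=
  ∀ i j : Fin n, (j : ℕ) + 1 = (i : ℕ) →
    Findep A F (X i) (∏ k ∈ Finset.univ.filter (fun k => k < j), X k) (X j)

/-! ### Auxiliary lemmas -/

lemma act_zero (A : MAction M G) (Y : M) : A.act Y 0 = 0 := by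
  have h := A.act_add Y 0 0
  rw [add_zero] at h
  exact (left_eq_add.mp h)

lemma act_sub (A : MAction M G) (Y : M) (g h : G) :
    A.act Y (g - h) = A.act Y g - A.act Y h := by
  have h1 : A.act Y ((g - h) + h) = A.act Y (g - h) + A.act Y h := A.act_add Y _ _
  rw [sub_add_cancel] at h1
  rw [h1]; abel

lemma act_congr (A : MAction M G) {p q : M} (h : p = q) (g : G) :
    A.act p g = A.act q g := by rw [h]

/-- `X.F(X) = 0` for idempotent `X`. -/
lemma xFx (hidem : ∀ x : M, x * x = x) (A : MAction M G) (F : M → G)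
    (hF : ChainRule A F) (x : M) : A.act x (F x) = 0 := by
  have h := hF x x
  rw [hidem] at h
  exact (left_eq_add.mp h)

/-- Symmetry of the second-order term. -/
lemma Fsymm (A : MAction M G) (F : M → G) (hF : ChainRule A F) (x y : M) :
    F x - A.act y (F x) = F y - A.act x (F y) := by
  have h2 := hF y x
  rw [mul_comm, hF x y] at h2
  exact sub_eq_sub_iff_add_eq_add.mpr h2

section Markov

variable (hidem : ∀ x : M, x * x = x) (A : MAction M G) (F : M → G)
  (hF : ChainRule A F) {n : ℕ} (X : Fin n → M) (hmc : FMarkovChain A F X)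

include hidem hF hmc in
/-- Base case: conditioning on the immediate predecessor. -/
lemma Ebase : ∀ a b : Fin n, (a : ℕ) + 1 = (b : ℕ) → ∀ m : Fin n, m ≤ a → ∀ W : M,
    A.act (W * X a) (F (X m) - A.act (X b) (F (X m))) = 0 := by
  intro a b hab m hm W
  rw [Fsymm A F hF (X m) (X b)]
  set g := F (X b) with hg
  rcases eq_or_lt_of_le hm with hma | hma
  · subst hma
    rw [act_sub, A.act_mul, act_congr A (show W * X m * X m = W * X m by
      rw [mul_assoc, hidem]) g, sub_self]
  · -- m < a, use the Markov property
    have hmk := hmc b a hab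
    unfold Findep at hmk
    set P := ∏ k ∈ Finset.univ.filter (fun k => k < a), X k with hP
    rw [act_sub] at hmk
    have h1 : A.act (X a) g = A.act (X a) (A.act P g) := by
      rw [← hg] at hmk; exact sub_eq_zero.mp hmk
    have hmP : X m * P = P := by
      have hmem : m ∈ Finset.univ.filter (fun k => k < a) := by
        simp [Finset.mem_filter, hma]
      rw [hP, ← Finset.mul_prod_erase _ _ hmem, ← mul_assoc, hidem]
    rw [act_sub]
    have e1 : A.act (W * X a) g = A.act (W * X a * P) g := by
      rw [← A.act_mul W (X a) g, h1, A.act_mul, A.act_mul]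
    have e2 : A.act (W * X a) (A.act (X m) g) = A.act (W * X a * P) g := by
      rw [A.act_mul]
      have : A.act (W * X m) (A.act (X a) g) = A.act (W * X m) (A.act (X a) (A.act P g)) := by
        rw [h1]
      rw [A.act_mul, A.act_mul, A.act_mul] at this
      calc A.act (W * X a * X m) g = A.act (W * X m * X a) g := by
            apply act_congr; ac_rfl
        _ = A.act (W * X m * X a * P) g := this
        _ = A.act (W * X a * (X m * P)) g := by apply act_congr; ac_rfl
        _ = A.act (W * X a * P) g := by rw [hmP]
    rw [e1, e2, sub_self]

include hidem hF hmc in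
/-- Conditioning on any intermediate variable. -/
lemma Elem : ∀ k : ℕ, ∀ a b : Fin n, (b : ℕ) - (a : ℕ) = k → a < b →
    ∀ m : Fin n, m ≤ a → ∀ W : M,
    A.act (W * X a) (F (X m) - A.act (X b) (F (X m))) = 0 := by
  intro k
  induction k using Nat.strong_induction_on with
  | _ k ih =>
    intro a b hk hab m hm W
    rcases eq_or_lt_of_le (Nat.succ_le_of_lt (show (a:ℕ) < b from hab)) with h1 | h1
    · exact Ebase hidem A F hF X hmc a b h1 m hm W
    · -- a + 1 < b
      have han : (a : ℕ) + 1 < n := lt_trans h1 b.isLt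
      set a' : Fin n := ⟨(a : ℕ) + 1, han⟩ with ha'
      have haa' : (a : ℕ) + 1 = (a' : ℕ) := rfl
      have hma' : m ≤ a' := le_trans hm (le_of_lt (by exact Fin.lt_def.mpr (by omega)))
      set g := F (X m) with hg
      have e1 := Ebase hidem A F hF X hmc a a' haa' m hm W
      have e2 := Ebase hidem A F hF X hmc a a' haa' m hm (W * X b)
      have e3 := ih ((b : ℕ) - (a' : ℕ)) (by omega) a' b rfl
        (Fin.lt_def.mpr (by omega)) m hma' (W * X a)
      rw [act_sub, sub_eq_zero] at e1 e2 e3 ⊢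
      calc A.act (W * X a) g = A.act (W * X a) (A.act (X a') g) := e1
        _ = A.act (W * X a * X a') g := A.act_mul _ _ _
        _ = A.act (W * X a * X a') (A.act (X b) g) := e3
        _ = A.act (W * X a * X a' * X b) g := A.act_mul _ _ _
        _ = A.act (W * X b * X a * X a') g := by apply act_congr; ac_rfl
        _ = A.act (W * X b * X a) (A.act (X a') g) := (A.act_mul _ _ _).symm
        _ = A.act (W * X b * X a) g := e2.symm
        _ = A.act (W * X a * X b) g := by apply act_congr; ac_rfl
        _ = A.act (W * X a) (A.act (X b) g) := (A.act_mul _ _ _).symm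

end Markov

/-- The "subtract the action" operator `T_Y g = g - Y.g`. -/
def Tact (A : MAction M G) (Y : M) (g : G) : G := g - A.act Y g

/-- Iterated `Tact` over a list of indices. -/
def Phi (A : MAction M G) {ι : Type*} (X : ι → M) : List ι → G → G
  | [], g => g
  | a :: s, g => Tact A (X a) (Phi A X s g)

lemma act_Tact (A : MAction M G) (W Y : M) (g : G) :
    A.act W (Tact A Y g) = A.act W g - A.act (W * Y) g := by
  rw [Tact, act_sub, A.act_mul]

lemma Tact_act (A : MAction M G) (Y Z : M) (g : G) :
    Tact A Y (A.act Z g) = A.act Z (Tact A Y g) := by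
  simp only [Tact, act_sub, A.act_mul, mul_comm]

lemma Fseq_map (A : MAction M G) (F : M → G) {ι : Type*} (X : ι → M) :
    ∀ (s : List ι) (m : ι), Fseq A F (s.map X ++ [X m]) = Phi A X s (F (X m)) := by
  intro s
  induction s with
  | nil => intro m; rfl
  | cons a s ih =>
    intro m
    cases s with
    | nil => simp [Fseq, Phi, Tact]
    | cons c s' =>
      show Fseq A F (X a :: (X c :: (s'.map X ++ [X m]))) = _
      rw [show Fseq A F (X a :: (X c :: (s'.map X ++ [X m]))) =
        Fseq A F (X c :: (s'.map X ++ [X m]))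
          - A.act (X a) (Fseq A F (X c :: (s'.map X ++ [X m]))) from rfl]
      have := ih m
      rw [show (c :: s').map X ++ [X m] = X c :: (s'.map X ++ [X m]) from rfl] at this
      rw [this]; rfl

section Markov2

variable (hidem : ∀ x : M, x * x = x) (A : MAction M G) (F : M → G)
  (hF : ChainRule A F) {n : ℕ} (X : Fin n → M) (hmc : FMarkovChain A F X)

include hidem hF hmc in
lemma Ephi : ∀ (s : List (Fin n)) (W : M) (a b m : Fin n), a < b → m ≤ a →
    A.act (W * X a) (Tact A (X b) (Phi A X s (F (X m)))) = 0 := by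
  intro s
  induction s with
  | nil =>
    intro W a b m hab hm
    show A.act (W * X a) (Tact A (X b) (F (X m))) = 0
    rw [Tact]
    exact Elem hidem A F hF X hmc _ a b rfl hab m hm W
  | cons c s ih =>
    intro W a b m hab hm
    show A.act (W * X a) (Tact A (X b) (Tact A (X c) (Phi A X s (F (X m))))) = 0
    set g := Phi A X s (F (X m)) with hg
    have key : Tact A (X b) (Tact A (X c) g) =
        Tact A (X b) g - A.act (X c) (Tact A (X b) g) := by
      simp only [Tact, act_sub, A.act_mul, mul_comm (X b) (X c)]
      abel
    rw [key, act_sub, A.act_mul]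
    have h1 := ih W a b m hab hm
    have h2 := ih (W * X c) a b m hab hm
    rw [show W * X a * X c = W * X c * X a by ac_rfl]
    rw [h1, h2, sub_self]

include hidem hF hmc in
lemma MidLem : ∀ (s : List (Fin n)) (W : M) (m b : Fin n),
    (∀ c ∈ s, m ≤ c ∧ c < b) →
    A.act W (Tact A (X b) (Phi A X s (F (X m)))) = A.act W (Tact A (X b) (F (X m))) := by
  intro s
  induction s with
  | nil => intro W m b _; rfl
  | cons c s ih =>
    intro W m b hc
    show A.act W (Tact A (X b) (Tact A (X c) (Phi A X s (F (X m))))) = _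
    set g := Phi A X s (F (X m)) with hg
    have key : Tact A (X b) (Tact A (X c) g) =
        Tact A (X b) g - A.act (X c) (Tact A (X b) g) := by
      simp only [Tact, act_sub, A.act_mul, mul_comm (X b) (X c)]
      abel
    rw [key, act_sub, A.act_mul]
    have hcc := hc c (by simp)
    have h2 := Ephi hidem A F hF X hmc s W c b m hcc.2 hcc.1
    rw [h2, sub_zero]
    exact ih W m b (fun d hd => hc d (by simp [hd]))

end Markov2

/-- If `X₁, …, X_n` form an `F`-Markov chain, then for all `I, J ⊆ [n]`
with `I = {i₁ < i₂ < … < i_q}` nonempty,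
`X_J.F(X_{i₁}; X_{i₂}; …; X_{i_q}) = X_J.F(X_{i₁}; X_{i_q})`. -/
theorem markov_chain_interaction_terms
    {M G : Type*} [CommMonoid M] [AddCommGroup G]
    (hidem : ∀ x : M, x * x = x)
    (A : MAction M G) (F : M → G) (hF : ChainRule A F)
    (n : ℕ) (X : Fin n → M) (hmc : FMarkovChain A F X)
    (I J : Finset (Fin n)) (hI : I.Nonempty) :
    A.act (∏ j ∈ J, X j) (Fint A F X I) =
      A.act (∏ j ∈ J, X j) (Fof A F [X (I.min' hI), X (I.max' hI)]) := by
  set l := I.sort (· ≤ ·) with hl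
  have hmem : ∀ x, x ∈ l ↔ x ∈ I := fun x => Finset.mem_sort _
  have hlt : List.Pairwise (· < ·) l := (Finset.sortedLT_sort I).pairwise
  have hlne : l ≠ [] := by
    intro h
    rcases hI with ⟨x, hx⟩
    rw [← hmem] at hx
    simp [h] at hx
  obtain ⟨m, t, hmt⟩ := List.exists_cons_of_ne_nil hlne
  -- m is the head: every element of t is > m
  have hmlt : ∀ c ∈ t, m < c := by
    intro c hc
    have := hlt
    rw [hmt, List.pairwise_cons] at this
    exact this.1 c hc
  have hmin : I.min' hI = m := by
    apply le_antisymm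
    · exact Finset.min'_le I m ((hmem m).mp (by rw [hmt]; simp))
    · have hmem' : I.min' hI ∈ l := (hmem _).mpr (I.min'_mem hI)
      rw [hmt] at hmem'
      rcases List.mem_cons.mp hmem' with h | h
      · exact le_of_eq h.symm
      · exact le_of_lt (hmlt _ h)
  have hFint : Fint A F X I = Fseq A F ((t.reverse).map X ++ [X m]) := by
    rw [Fint, Fof, ← List.map_reverse, ← hl, hmt]
    simp
  cases ht : t.reverse with
  | nil =>
    -- I is a singleton {m}
    have ht' : t = [] := by simpa using congrArg List.reverse ht
    have hmax : I.max' hI = m := by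
      have hmem' : I.max' hI ∈ l := (hmem _).mpr (I.max'_mem hI)
      rw [hmt, ht'] at hmem'
      simpa using hmem'
    rw [hFint, ht', hmin, hmax]
    show A.act _ (Fseq A F [X m]) = A.act _ (Fof A F [X m, X m])
    rw [show Fof A F [X m, X m] = F (X m) - A.act (X m) (F (X m)) from rfl]
    rw [xFx hidem A F hF (X m), sub_zero]
    rfl
  | cons b s =>
    -- b is the last element of l, hence the max
    have htb : t = s.reverse ++ [b] := by
      have := congrArg List.reverse ht
      simpa using this
    have hsb : ∀ c ∈ s, c < b := by
      intro c hc
      have hsort : List.Pairwise (· < ·) t := by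
        have := hlt; rw [hmt, List.pairwise_cons] at this; exact this.2
      rw [htb, List.pairwise_append] at hsort
      exact hsort.2.2 c (by simpa using hc) b (by simp)
    have hbt : b ∈ t := by rw [htb]; simp
    have hmax : I.max' hI = b := by
      apply le_antisymm
      · have hmem' : I.max' hI ∈ l := (hmem _).mpr (I.max'_mem hI)
        rw [hmt] at hmem'
        rcases List.mem_cons.mp hmem' with h | h
        · exact le_of_lt (h ▸ hmlt b hbt)
        · rw [htb] at h
          rcases (List.mem_append.mp h) with h' | h'
          · exact le_of_lt (hsb _ (by simpa using h'))
          · simp at h'; exact le_of_eq h'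
      · exact Finset.le_max' I b ((hmem b).mp (by rw [hmt]; exact List.mem_cons_of_mem m hbt))
    rw [hFint, ht, hmin, hmax]
    rw [show (b :: s).map X ++ [X m] = X b :: (s.map X ++ [X m]) from rfl]
    have hcons : Fseq A F (X b :: (s.map X ++ [X m])) =
        Tact A (X b) (Fseq A F (s.map X ++ [X m])) := by
      cases s with
      | nil => rfl
      | cons c s' => rfl
    rw [hcons, Fseq_map]
    have hRHS : Fof A F [X m, X b] = Tact A (X b) (F (X m)) := rfl
    rw [hRHS]
    apply MidLem hidem A F hF X hmc
    intro c hc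
    have hct : c ∈ t := by rw [htb]; simp [hc]
    exact ⟨le_of_lt (hmlt c hct), hsb c hc⟩

end AMRF
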